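/- arXiv:2501.05954 — 2 statements merged into one kernel-verified Lean document; each statement's English description precedes it below -/
import Mathlib

section
/- Let κ be an uncountable cardinal. Suppose there exist a club (closed unbounded) set S ⊆ κ⁺ and a sequence ⟨C_α : α ∈ S⟩ such that: (i) for every α ∈ S, C_α ⊆ S and C_α is a closed set of limit ordinals below α; (ii) for every α ∈ S of uncountable cofinality, C_α is unbounded in α; (iii) for all α, β ∈ S, if β ∈ C_α then C_β = β ∩ C_α; and (iv) for every α ∈ S the order type of C_α is at most κ. Then □'_κ holds, i.e., there exists a sequence ⟨C'_α : α < κ⁺⟩ defined on all ordinals below κ⁺ satisfying (i)–(iv) with S replaced by κ⁺. -/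
open Set Cardinal

universe u

/-- The order type of a set of ordinals. -/
noncomputable def otype (C : Set Ordinal.{u}) : Ordinal.{u + 1} :=
  Ordinal.type ((· < ·) : C → C → Prop)

/-- The order type of the set of ordinals `C` is at most the ordinal `o`. -/
noncomputable def OtypeLE (C : Set Ordinal.{u}) (o : Ordinal.{u}) : Prop :=
  otype C ≤ Ordinal.lift.{u + 1} o

/-- `C` is closed in `α`: the supremum of any nonempty subset of `C` that stays
below `α` belongs to `C`. -/
def IsClosedIn (C : Set Ordinal) (α : Ordinal) : Prop :=
  ∀ s ⊆ C, s.Nonempty → sSup s < α → sSup s ∈ C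

/-- `S` is a club (closed unbounded) subset of `α`. -/
def IsClubIn (S : Set Ordinal) (α : Ordinal) : Prop :=
  S ⊆ Set.Iio α ∧ IsClosedIn S α ∧ ∀ β < α, ∃ γ ∈ S, β < γ

/-- `β` is a limit point of the set of ordinals `C`. -/
def IsLimitPointOf (β : Ordinal) (C : Set Ordinal) : Prop :=
  β ≠ 0 ∧ ∀ γ < β, ∃ δ ∈ C, γ < δ ∧ δ < β

/-- `⟨C α : α ∈ S⟩` is an almost coherent sequence on `S`: for all `α, β ∈ S`,
(1) `C α ⊆ S` and `C α` is a closed set of limit ordinals below `α`,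
(2) if `cof α > ω` then `C α` is unbounded in `α`, and
(3) if `β ∈ C α` then `C β = β ∩ C α`. -/
def AlmostCoherentOn (S : Set Ordinal) (C : Ordinal → Set Ordinal) : Prop :=
  ∀ α ∈ S,
    C α ⊆ S ∧
    (∀ β ∈ C α, β < α ∧ Order.IsSuccLimit β) ∧
    IsClosedIn (C α) α ∧
    (Cardinal.aleph0 < α.cof → ∀ γ < α, ∃ δ ∈ C α, γ < δ) ∧
    (∀ β ∈ C α, C β = C α ∩ Set.Iio β)

/-- `⟨E α : α < λ⟩` is a coherent sequence: for every limit `α < λ`, `E α` is a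
club subset of `α`, and `E β = β ∩ E α` whenever `β` is a limit point of `E α`. -/
def IsCoherentSeq (lam : Ordinal) (E : Ordinal → Set Ordinal) : Prop :=
  ∀ α < lam, Order.IsSuccLimit α →
    IsClubIn (E α) α ∧
    ∀ β, IsLimitPointOf β (E α) → E β = E α ∩ Set.Iio β

lemma otype_le_otype {C D : Set Ordinal.{u}} (g : Ordinal.{u} → Ordinal.{u})
    (hmem : ∀ c ∈ C, g c ∈ D) (hmono : ∀ a ∈ C, ∀ b ∈ C, a < b → g a < g b) :
    otype C ≤ otype D := by
  rw [otype, otype, Ordinal.type_le_iff']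
  refine ⟨⟨⟨fun c => ⟨g c.1, hmem c.1 c.2⟩, ?_⟩, ?_⟩⟩
  · rintro ⟨a, ha⟩ ⟨b, hb⟩ h
    simp only [Subtype.mk.injEq] at h ⊢
    rcases lt_trichotomy a b with hl | hl | hl
    · exact absurd h (hmono a ha b hb hl).ne
    · exact hl
    · exact absurd h.symm (hmono b hb a ha hl).ne
  · rintro ⟨a, ha⟩ ⟨b, hb⟩
    constructor
    · intro h
      simp only [Subtype.mk_lt_mk] at h ⊢
      by_contra hc
      push_neg at hc
      rcases hc.lt_or_eq with hl | hl
      · exact absurd (hmono b hb a ha hl) (asymm h)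
      · subst hl; exact lt_irrefl _ h
    · intro h
      exact hmono a ha b hb h

lemma otype_mono {C D : Set Ordinal.{u}} (h : C ⊆ D) : otype C ≤ otype D :=
  otype_le_otype id (fun c hc => h hc) (fun _ _ _ _ h => h)

lemma otype_empty : otype (∅ : Set Ordinal.{u}) = 0 := by
  rw [otype]
  exact Ordinal.type_eq_zero_of_empty _

lemma otype_Iio (o : Ordinal.{u}) : otype (Set.Iio o) = Ordinal.lift.{u + 1} o := by
  have e := (Ordinal.ToType.mk (o := o)).toRelIsoLT
  have h := @RelIso.ordinal_lift_type_eq _ _ _ _ isWellOrder_lt isWellOrder_lt e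
  have h2 := Ordinal.type_toType o
  rw [h2] at h
  rw [otype, ← h, Ordinal.lift_id'.{u, u + 1}]

lemma sSup_le_of_forall {s : Set Ordinal.{u}} {a : Ordinal.{u}} (h : ∀ b ∈ s, b ≤ a) :
    sSup s ≤ a := by
  rcases s.eq_empty_or_nonempty with rfl | hne
  · simp
  · exact csSup_le hne h

lemma sSup_add_image (ν : Ordinal.{u}) {t : Set Ordinal.{u}} (ht : t.Nonempty)
    (hb : BddAbove t) : sSup ((fun e => ν + e) '' t) = ν + sSup t := by
  apply le_antisymm
  · apply csSup_le (ht.image _)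
    rintro y ⟨e, he, rfl⟩
    exact add_le_add_right (le_csSup hb he) ν
  · have hbi : BddAbove ((fun e => ν + e) '' t) := by
      obtain ⟨c, hc⟩ := hb
      exact ⟨ν + c, by rintro y ⟨e, he, rfl⟩; exact add_le_add_right (hc he) ν⟩
    by_cases hmem : sSup t ∈ t
    · exact le_csSup hbi ⟨sSup t, hmem, rfl⟩
    · have hlim : Order.IsSuccLimit (sSup t) := by
        obtain ⟨e, he⟩ := id ht
        have he' : e ≤ sSup t := le_csSup hb he
        refine Ordinal.isSuccLimit_iff.2 ⟨fun h0 => hmem ?_, Order.isSuccPrelimit_of_succ_lt (fun a ha => ?_)⟩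
        · rw [h0, nonpos_iff_eq_zero] at he'
          rw [h0, ← he']
          exact he
        · obtain ⟨d, hd, had⟩ := exists_lt_of_lt_csSup ht ha
          have hd' : d ≤ sSup t := le_csSup hb hd
          have hdne : d ≠ sSup t := fun h => hmem (h ▸ hd)
          exact lt_of_le_of_lt (Order.succ_le_of_lt had) (hd'.lt_of_ne hdne)
      rw [Ordinal.add_le_iff_of_isSuccLimit hlim]
      intro b' hb'
      obtain ⟨d, hd, hbd⟩ := exists_lt_of_lt_csSup ht hb'
      exact le_trans (add_le_add_right hbd.le ν) (le_csSup hbi ⟨d, hd, rfl⟩)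

lemma IsLimitPointOf.isLimit {β : Ordinal.{u}} {A : Set Ordinal.{u}}
    (h : IsLimitPointOf β A) : Order.IsSuccLimit β := by
  rcases Ordinal.zero_or_succ_or_isSuccLimit β with rfl | ⟨a, rfl⟩ | hl
  · exact absurd rfl h.1
  · obtain ⟨δ, _, hδ1, hδ2⟩ := h.2 a (Order.lt_succ a)
    exact absurd (Order.lt_succ_iff.mp hδ2) (not_le.mpr hδ1)
  · exact hl

lemma isLimitPointOf_sSup {A s : Set Ordinal.{u}} (hbdd : BddAbove s) (hs : s.Nonempty)
    (h : ∀ e ∈ s, e ∈ A ∨ IsLimitPointOf e A) (hns : sSup s ∉ s) :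
    IsLimitPointOf (sSup s) A := by
  constructor
  · intro h0
    obtain ⟨e, he⟩ := hs
    have : e ≤ sSup s := le_csSup hbdd he
    rw [h0, nonpos_iff_eq_zero] at this
    exact hns (by rwa [h0, ← this])
  · intro γ hγ
    obtain ⟨e, he, hγe⟩ := exists_lt_of_lt_csSup hs hγ
    have he' : e < sSup s := (le_csSup hbdd he).lt_of_ne (fun hh => hns (hh ▸ he))
    rcases h e he with hA | hlp
    · exact ⟨e, hA, hγe, he'⟩
    · obtain ⟨δ, hδA, hγδ, hδe⟩ := hlp.2 γ hγe
      exact ⟨δ, hδA, hγδ, hδe.trans he'⟩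

lemma isLimitPointOf_sSup' {A s : Set Ordinal.{u}} (hbdd : BddAbove s) (hs : s.Nonempty)
    (h : ∀ e ∈ s, IsLimitPointOf e A) : IsLimitPointOf (sSup s) A := by
  by_cases hm : sSup s ∈ s
  · exact h _ hm
  · exact isLimitPointOf_sSup hbdd hs (fun e he => Or.inr (h e he)) hm

lemma exists_limitPoint {A : Set Ordinal.{u}} {α γ : Ordinal.{u}}
    (hcof : Cardinal.aleph0 < α.cof) (hγ : γ < α)
    (hA : ∀ x < α, ∃ a, a ∈ A ∧ x < a ∧ a < α) :
    ∃ σ, σ < α ∧ γ < σ ∧ IsLimitPointOf σ A := by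
  classical
  set F : Ordinal → Ordinal := fun x => sInf {a | a ∈ A ∧ x < a ∧ γ < a ∧ a < α} with hF
  have hne : ∀ x < α, {a | a ∈ A ∧ x < a ∧ γ < a ∧ a < α}.Nonempty := by
    intro x hx
    obtain ⟨a, ha, hxa, haα⟩ := hA (max x γ) (max_lt hx hγ)
    exact ⟨a, ha, (le_max_left x γ).trans_lt hxa, (le_max_right x γ).trans_lt hxa, haα⟩
  have hkey : ∀ x < α, F x ∈ A ∧ x < F x ∧ γ < F x ∧ F x < α := fun x hx => csInf_mem (hne x hx)
  have h0 : (0 : Ordinal) < α := (zero_le (a := γ)).trans_lt hγ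
  set x : ℕ → Ordinal := fun n => F^[n] (F 0) with hx
  have hind : ∀ n, x n ∈ A ∧ γ < x n ∧ x n < α := by
    intro n
    induction n with
    | zero =>
      obtain ⟨h1, _, h3, h4⟩ := hkey 0 h0
      exact ⟨h1, h3, h4⟩
    | succ n ih =>
      have hxs : x (n + 1) = F (x n) := Function.iterate_succ_apply' F n (F 0)
      obtain ⟨h1, _, h3, h4⟩ := hkey (x n) ih.2.2
      rw [hxs]
      exact ⟨h1, h3, h4⟩
  have hmono : ∀ n, x n < x (n + 1) := by
    intro n
    have hxs : x (n + 1) = F (x n) := Function.iterate_succ_apply' F n (F 0)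
    rw [hxs]
    exact (hkey (x n) (hind n).2.2).2.1
  have hbdd : BddAbove (Set.range x) := by
    refine ⟨α, ?_⟩
    rintro y ⟨n, rfl⟩
    exact ((hind n).2.2).le
  refine ⟨⨆ n, x n, ?_, ?_, ?_, ?_⟩
  · have hmk : Cardinal.lift.{u, 0} #ℕ < α.cof := by
      rw [Cardinal.mk_nat, Cardinal.lift_aleph0]; exact hcof
    exact Ordinal.iSup_lt_ord_lift hmk (fun n => (hind n).2.2)
  · exact (hind 0).2.1.trans_le (le_ciSup hbdd 0)
  · intro hzero
    have := (hind 0).2.1.trans_le (le_ciSup hbdd 0)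
    rw [hzero] at this
    exact not_lt_zero' this
  · intro γ' hγ'
    rw [lt_ciSup_iff hbdd] at hγ'
    obtain ⟨n, hn⟩ := hγ'
    exact ⟨x n, (hind n).1, hn, (hmono n).trans_le (le_ciSup hbdd (n + 1))⟩

/-- The conditions of a square-prime sequence defined on all `α ≤ θ`. -/
def Good (κ : Cardinal.{u}) (θ : Ordinal.{u}) (D : Ordinal.{u} → Set Ordinal.{u}) : Prop :=
  ∀ α ≤ θ,
    (∀ β ∈ D α, β < α ∧ Order.IsSuccLimit β) ∧
    IsClosedIn (D α) α ∧
    (Cardinal.aleph0 < α.cof → ∀ γ < α, ∃ δ ∈ D α, γ < δ) ∧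
    (∀ β ∈ D α, D β = D α ∩ Set.Iio β) ∧
    OtypeLE (D α) κ.ord

lemma extend {κ : Cardinal.{u}} {θ : Ordinal.{u}}
    (H : ∀ ξ < θ, ∃ D, Good κ ξ D)
    (W T : Set Ordinal.{u}) (C : Ordinal.{u} → Set Ordinal.{u})
    (hWsub : W ⊆ Set.Iio θ) (hWcl : IsClosedIn W θ)
    (hWunb : ∀ γ < θ, ∃ b ∈ W, γ ≤ b)
    (hTW : T ⊆ W) (hWT : ∀ b ∈ W, IsLimitPointOf b W → b ∈ T)
    (hACT : AlmostCoherentOn T C) (hotT : ∀ b ∈ T, OtypeLE (C b) κ.ord) :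
    ∃ C' : Ordinal.{u} → Set Ordinal.{u},
      (∀ b ∈ T, C' b = C b) ∧
      ∀ α < θ,
        (∀ β ∈ C' α, β < α ∧ Order.IsSuccLimit β) ∧
        IsClosedIn (C' α) α ∧
        (Cardinal.aleph0 < α.cof → ∀ γ < α, ∃ δ ∈ C' α, γ < δ) ∧
        (∀ β ∈ C' α, C' β = C' α ∩ Set.Iio β) ∧
        OtypeLE (C' α) κ.ord := by
  classical
  choose g hg using H
  set G : Ordinal.{u} → Ordinal.{u} → Set Ordinal.{u} :=
    fun ξ => if h : ξ < θ then g ξ h else fun _ => ∅ with hGdef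
  have hGood : ∀ ξ, ξ < θ → Good κ ξ (G ξ) := by
    intro ξ h
    have : G ξ = g ξ h := by rw [hGdef]; simp only [dif_pos h]
    rw [this]
    exact hg ξ h
  set nu : Ordinal.{u} → Ordinal.{u} := fun α => sSup (W ∩ Set.Iio α) with hnudef
  set Bs : Ordinal.{u} → Ordinal.{u} := fun α => sInf {b | b ∈ W ∧ α ≤ b} with hBsdef
  set C' : Ordinal.{u} → Set Ordinal.{u} := fun α =>
    if α ∈ T then C α else (fun e => nu α + e) '' G (Bs α - nu α) (α - nu α) with hC'def
  have hC'T : ∀ b ∈ T, C' b = C b := by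
    intro b hb
    rw [hC'def]
    simp only [if_pos hb]
  have hbddW : ∀ α, BddAbove (W ∩ Set.Iio α) := fun α => ⟨α, fun b hb => hb.2.le⟩
  have hnu_le : ∀ α, nu α ≤ α := fun α => sSup_le_of_forall (fun b hb => hb.2.le)
  have hnomid : ∀ α, ∀ b ∈ W, b < α → b ≤ nu α :=
    fun α b hb hb2 => le_csSup (hbddW α) ⟨hb, hb2⟩
  -- basic facts about a gap position α
  have hBsfacts : ∀ α, α < θ → Bs α ∈ W ∧ α ≤ Bs α ∧ Bs α < θ ∧ Bs α - nu α < θ := by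
    intro α hα
    have hne : {b | b ∈ W ∧ α ≤ b}.Nonempty := by
      obtain ⟨b, hb, hab⟩ := hWunb α hα
      exact ⟨b, hb, hab⟩
    have hmem := csInf_mem hne
    have hBθ : Bs α < θ := hWsub hmem.1
    exact ⟨hmem.1, hmem.2, hBθ, (Ordinal.sub_le_self _ _).trans_lt hBθ⟩
  -- ν α < α for gap positions
  have hnult : ∀ α, α < θ → α ∉ T → α ≠ 0 → nu α < α := by
    intro α hα hαT hα0
    rcases eq_or_lt_of_le (hnu_le α) with heq | hlt
    · exfalso
      have hWe : (W ∩ Set.Iio α).Nonempty := by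
        by_contra hempty
        rw [Set.not_nonempty_iff_eq_empty] at hempty
        have : nu α = 0 := by
          have h3 : sSup (W ∩ Set.Iio α) = nu α := rfl
          rw [← h3, hempty, csSup_empty]
          rfl
        rw [this] at heq
        exact hα0 heq.symm
      have hlp : IsLimitPointOf α W := by
        refine ⟨hα0, fun γ' hγ' => ?_⟩
        by_contra hno
        push_neg at hno
        have : nu α ≤ γ' := sSup_le_of_forall (fun b hb => by
          by_contra hgb
          push_neg at hgb
          exact absurd (hno b hb.1 hgb) (not_le.mpr hb.2))
        rw [← heq] at hγ'
        exact absurd this (not_le.mpr hγ')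
      have hαW : α ∈ W := by
        have h3 : sSup (W ∩ Set.Iio α) = nu α := rfl
        have h4 : sSup (W ∩ Set.Iio α) < θ := by rw [h3, heq]; exact hα
        have h5 := hWcl (W ∩ Set.Iio α) inter_subset_left hWe h4
        rw [h3, heq] at h5
        exact h5
      exact hαT (hWT α hαW hlp)
    · exact hlt
  refine ⟨C', hC'T, ?_⟩
  intro α hα
  by_cases hαT : α ∈ T
  · obtain ⟨hsub, hlim, hcl, hclub, hcoh⟩ := hACT α hαT
    have hCα : C' α = C α := hC'T α hαT
    rw [hCα]
    refine ⟨hlim, hcl, hclub, ?_, hotT α hαT⟩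
    intro β hβ
    rw [hC'T β (hsub hβ), hcoh β hβ]
  · -- gap case
    obtain ⟨hBW, hαB, hBθ, hθ'θ⟩ := hBsfacts α hα
    have hνB : nu α ≤ Bs α := (hnu_le α).trans hαB
    have hsub1 : nu α + (Bs α - nu α) = Bs α := Ordinal.add_sub_cancel_of_le hνB
    have hsub2 : nu α + (α - nu α) = α := Ordinal.add_sub_cancel_of_le (hnu_le α)
    have hδθ' : α - nu α ≤ Bs α - nu α :=
      Ordinal.sub_le.2 (by rw [hsub1]; exact hαB)
    have hCα : C' α = (fun e => nu α + e) '' G (Bs α - nu α) (α - nu α) := by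
      rw [hC'def]; simp only [if_neg hαT]
    obtain ⟨hlt', hcl', hclub', hcoh', hot'⟩ := hGood (Bs α - nu α) hθ'θ (α - nu α) hδθ'
    have helem : ∀ β ∈ C' α, β < α ∧ Order.IsSuccLimit β := by
      rw [hCα]
      rintro β ⟨e, he, rfl⟩
      obtain ⟨helt, helim⟩ := hlt' e he
      refine ⟨?_, Ordinal.isSuccLimit_add _ helim⟩
      calc nu α + e < nu α + (α - nu α) := (add_lt_add_iff_left (nu α)).2 helt
        _ = α := hsub2
    refine ⟨helem, ?_, ?_, ?_, ?_⟩
    · -- closedness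
      intro s hs hsne hssup
      rw [hCα] at hs
      set t := (fun y => y - nu α) '' s with htdef
      have hts : s = (fun e => nu α + e) '' t := by
        ext y
        constructor
        · intro hy
          obtain ⟨e, he, rfl⟩ := hs hy
          exact ⟨nu α + e - nu α, ⟨nu α + e, hy, rfl⟩, by rw [Ordinal.add_sub_cancel]⟩
        · rintro ⟨e, ⟨y', hy', rfl⟩, rfl⟩
          show nu α + (y' - nu α) ∈ s
          obtain ⟨e', he', rfl⟩ := hs hy'
          rwa [Ordinal.add_sub_cancel]
      have htD : t ⊆ G (Bs α - nu α) (α - nu α) := by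
        rintro e ⟨y, hy, rfl⟩
        show y - nu α ∈ _
        obtain ⟨e', he', rfl⟩ := hs hy
        rwa [Ordinal.add_sub_cancel]
      have htne : t.Nonempty := hsne.image _
      have htbdd : BddAbove t := ⟨α - nu α, fun e he => ((hlt' e (htD he)).1).le⟩
      have hsup_eq : sSup s = nu α + sSup t := by
        rw [hts, sSup_add_image _ htne htbdd]
      rw [hsup_eq] at hssup ⊢
      have hsupt : sSup t < α - nu α := by
        have h6 : nu α + sSup t < nu α + (α - nu α) := by rw [hsub2]; exact hssup
        exact (add_lt_add_iff_left (nu α)).1 h6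
      rw [hCα]
      exact ⟨sSup t, hcl' t htD htne hsupt, rfl⟩
    · -- club
      intro hcof γ hγ
      have hα0 : α ≠ 0 := by
        rintro rfl
        rw [Ordinal.cof_zero] at hcof
        exact absurd hcof (by simp)
      have hνlt : nu α < α := hnult α hα hαT hα0
      have hδ0 : α - nu α ≠ 0 := by
        intro h0
        rw [h0, add_zero] at hsub2
        exact absurd hsub2 (ne_of_lt hνlt)
      have hcofδ : Cardinal.aleph0 < (α - nu α).cof := by
        have := Ordinal.cof_add (nu α) hδ0
        rw [hsub2] at this
        rwa [this] at hcof
      by_cases hc : nu α ≤ γ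
      · have hγδ : γ - nu α < α - nu α := by
          rw [← hsub2] at hγ
          have h2 : nu α + (γ - nu α) = γ := Ordinal.add_sub_cancel_of_le hc
          rw [← h2] at hγ
          exact (add_lt_add_iff_left (nu α)).1 hγ
        obtain ⟨e, he, hge⟩ := hclub' hcofδ (γ - nu α) hγδ
        refine ⟨nu α + e, by rw [hCα]; exact ⟨e, he, rfl⟩, ?_⟩
        calc γ = nu α + (γ - nu α) := (Ordinal.add_sub_cancel_of_le hc).symm
          _ < nu α + e := (add_lt_add_iff_left (nu α)).2 hge
      · push_neg at hc
        have hδpos : 0 < α - nu α := pos_iff_ne_zero.2 hδ0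
        obtain ⟨e, he, hge⟩ := hclub' hcofδ 0 hδpos
        refine ⟨nu α + e, by rw [hCα]; exact ⟨e, he, rfl⟩, ?_⟩
        exact hc.trans_le le_self_add
    · -- coherence
      rw [hCα]
      rintro β ⟨e, he, rfl⟩
      obtain ⟨heδ, helim⟩ := hlt' e he
      have hβα : nu α + e < α := by
        calc nu α + e < nu α + (α - nu α) := (add_lt_add_iff_left (nu α)).2 heδ
          _ = α := hsub2
      have hνβ0 : nu α < nu α + e := by
        have := (add_lt_add_iff_left (nu α)).2 helim.pos
        rwa [add_zero] at this
      have hβT : nu α + e ∉ T := by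
        intro hin
        exact absurd (hnomid α _ (hTW hin) hβα) (not_le.mpr hνβ0)
      have hνβ : nu (nu α + e) = nu α := by
        apply le_antisymm
        · exact sSup_le_of_forall (fun b hb => hnomid α b hb.1 (hb.2.trans hβα))
        · rcases (W ∩ Set.Iio α).eq_empty_or_nonempty with hemp | hne
          · have : nu α = 0 := by
              have h3 : sSup (W ∩ Set.Iio α) = nu α := rfl
              rw [← h3, hemp, csSup_empty]; rfl
            rw [this]
            exact zero_le
          · have hνlt : nu α < α := lt_of_lt_of_le hνβ0 (le_of_lt hβα)
            have hνW : nu α ∈ W := by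
              have h3 : sSup (W ∩ Set.Iio α) = nu α := rfl
              have h5 := hWcl (W ∩ Set.Iio α) inter_subset_left hne
                (by rw [h3]; exact hνlt.trans hα)
              rwa [h3] at h5
            exact le_csSup (hbddW _) ⟨hνW, hνβ0⟩
      have hBβ : Bs (nu α + e) = Bs α := by
        have hBβmem := csInf_mem (⟨Bs α, hBW, hβα.le.trans hαB⟩ :
          {b | b ∈ W ∧ nu α + e ≤ b}.Nonempty)
        apply le_antisymm
        · exact csInf_le (OrderBot.bddBelow _) ⟨hBW, hβα.le.trans hαB⟩
        · have hαBβ : α ≤ Bs (nu α + e) := by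
            by_contra hlt
            push_neg at hlt
            have := hnomid α _ hBβmem.1 hlt
            exact absurd (hBβmem.2.trans this) (not_le.mpr hνβ0)
          exact csInf_le (OrderBot.bddBelow _) ⟨hBβmem.1, hαBβ⟩
      have hC'β : C' (nu α + e) =
          (fun e' => nu α + e') '' G (Bs α - nu α) e := by
        rw [hC'def]
        simp only [if_neg hβT]
        rw [hνβ, hBβ, Ordinal.add_sub_cancel]
      rw [hC'β, hcoh' e he]
      ext y
      constructor
      · rintro ⟨e', ⟨he', helt'⟩, rfl⟩
        exact ⟨⟨e', he', rfl⟩, (add_lt_add_iff_left (nu α)).2 helt'⟩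
      · rintro ⟨⟨e', he', rfl⟩, hylt⟩
        exact ⟨e', ⟨he', (add_lt_add_iff_left (nu α)).1 hylt⟩, rfl⟩
    · -- order type
      rw [hCα]
      refine le_trans (otype_le_otype (fun y => y - nu α) ?_ ?_) hot'
      · rintro y ⟨e, he, rfl⟩
        show nu α + e - nu α ∈ _
        rwa [Ordinal.add_sub_cancel]
      · rintro a ⟨ea, hea, rfl⟩ b ⟨eb, heb, rfl⟩ hab
        show nu α + ea - nu α < nu α + eb - nu α
        rw [Ordinal.add_sub_cancel, Ordinal.add_sub_cancel]
        exact (add_lt_add_iff_left (nu α)).1 hab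

lemma otypeLE_empty (o : Ordinal.{u}) : OtypeLE (∅ : Set Ordinal.{u}) o := by
  rw [OtypeLE, otype_empty]
  exact zero_le

lemma exists_good (κ : Cardinal.{u}) :
    ∀ θ : Ordinal.{u}, θ.card ≤ κ → ∃ D, Good κ θ D := by
  intro θ
  induction θ using Ordinal.induction with
  | h θ IH =>
  intro hcard
  rcases Ordinal.zero_or_succ_or_isSuccLimit θ with rfl | ⟨ξ, rfl⟩ | hlim
  · -- zero
    refine ⟨fun _ => ∅, ?_⟩
    intro α hα
    rw [nonpos_iff_eq_zero] at hα
    subst hα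
    refine ⟨fun β hβ => absurd hβ (Set.notMem_empty β), ?_, ?_, ?_, otypeLE_empty _⟩
    · intro s hs hne _
      rw [Set.subset_empty_iff] at hs
      exact absurd hs hne.ne_empty
    · intro hcof
      rw [Ordinal.cof_zero] at hcof
      exact absurd hcof (by simp)
    · intro β hβ
      exact absurd hβ (Set.notMem_empty β)
  · -- successor
    obtain ⟨D, hD⟩ := IH ξ (Order.lt_succ ξ)
      ((Ordinal.card_le_card (Order.le_succ ξ)).trans hcard)
    refine ⟨fun α => if α = Order.succ ξ then ∅ else D α, ?_⟩
    intro α hα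
    by_cases hs : α = Order.succ ξ
    · subst hs
      beta_reduce
      rw [if_pos rfl]
      refine ⟨fun β hβ => absurd hβ (Set.notMem_empty β), ?_, ?_, ?_, otypeLE_empty _⟩
      · intro s hsub hne _
        rw [Set.subset_empty_iff] at hsub
        exact absurd hsub hne.ne_empty
      · intro hcof
        rw [Ordinal.cof_succ] at hcof
        exact absurd hcof (not_lt.mpr Cardinal.one_lt_aleph0.le)
      · intro β hβ
        exact absurd hβ (Set.notMem_empty β)
    · have hαξ : α ≤ ξ := Order.lt_succ_iff.mp (lt_of_le_of_ne hα hs)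
      obtain ⟨h1, h2, h3, h4, h5⟩ := hD α hαξ
      simp only [if_neg hs]
      refine ⟨h1, h2, h3, ?_, h5⟩
      intro β hβ
      have hβξ : β ≠ Order.succ ξ :=
        ne_of_lt ((h1 β hβ).1.trans_le (hαξ.trans (Order.le_succ ξ)))
      simp only [if_neg hβξ]
      exact h4 β hβ
  · -- limit
    obtain ⟨f, hf⟩ := Ordinal.exists_fundamental_sequence θ
    set A : Set Ordinal.{u} := {x | ∃ i, ∃ hi : i < θ.cof.ord, f i hi = x} with hAdef
    have hAsub : A ⊆ Set.Iio θ := by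
      rintro x ⟨i, hi, rfl⟩
      exact hf.lt hi
    have hAunb : ∀ γ < θ, ∃ a ∈ A, γ ≤ a := by
      intro γ hγ
      rw [← hf.blsub_eq, Ordinal.lt_blsub_iff] at hγ
      obtain ⟨i, hi, hγi⟩ := hγ
      exact ⟨f i hi, ⟨i, hi, rfl⟩, hγi⟩
    have hAunb' : ∀ x < θ, ∃ a, a ∈ A ∧ x < a ∧ a < θ := by
      intro x hx
      obtain ⟨a, ha, hxa⟩ := hAunb (Order.succ x) (hlim.succ_lt hx)
      exact ⟨a, ha, (Order.lt_succ x).trans_le hxa, hAsub ha⟩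
    have hotA : otype A ≤ Ordinal.lift.{u + 1} θ.cof.ord := by
      refine le_trans (otype_le_otype
        (fun a => sInf {i | ∃ hi : i < θ.cof.ord, f i hi = a}) ?_ ?_)
        (le_of_eq (otype_Iio θ.cof.ord))
      · rintro a ⟨i, hi, rfl⟩
        obtain ⟨hi', _⟩ := csInf_mem (⟨i, hi, rfl⟩ :
          {i' | ∃ hi' : i' < θ.cof.ord, f i' hi' = f i hi}.Nonempty)
        exact hi'
      · rintro a ⟨i, hi, rfl⟩ b ⟨j, hj, rfl⟩ hab
        obtain ⟨hi', heqi⟩ := csInf_mem (⟨i, hi, rfl⟩ :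
          {i' | ∃ hi' : i' < θ.cof.ord, f i' hi' = f i hi}.Nonempty)
        obtain ⟨hj', heqj⟩ := csInf_mem (⟨j, hj, rfl⟩ :
          {j' | ∃ hj' : j' < θ.cof.ord, f j' hj' = f j hj}.Nonempty)
        by_contra hle
        push_neg at hle
        have hm := hf.monotone hj' hi' hle
        rw [heqi, heqj] at hm
        exact absurd hab (not_lt.mpr hm)
    set E : Set Ordinal.{u} := {β | β < θ ∧ IsLimitPointOf β A} with hEdef
    have hotE : otype E ≤ otype A := by
      refine otype_le_otype (fun e => sInf {a | a ∈ A ∧ e ≤ a}) ?_ ?_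
      · intro e he
        have hne : {a | a ∈ A ∧ e ≤ a}.Nonempty := by
          obtain ⟨a, ha, hea⟩ := hAunb e he.1
          exact ⟨a, ha, hea⟩
        exact (csInf_mem hne).1
      · intro a ha b hb hab
        obtain ⟨δ, hδA, haδ, hδb⟩ := hb.2.2 a hab
        have hneb : {x | x ∈ A ∧ b ≤ x}.Nonempty := by
          obtain ⟨a', ha', hba'⟩ := hAunb b hb.1
          exact ⟨a', ha', hba'⟩
        have h1 : sInf {x | x ∈ A ∧ a ≤ x} ≤ δ := csInf_le (OrderBot.bddBelow _) ⟨hδA, haδ.le⟩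
        exact h1.trans_lt (hδb.trans_le (csInf_mem hneb).2)
    set W : Set Ordinal.{u} := A ∪ E with hWdef
    have hWsub : W ⊆ Set.Iio θ := Set.union_subset hAsub (fun e he => he.1)
    have hWlp : ∀ x, IsLimitPointOf x W → IsLimitPointOf x A := by
      intro x hx
      refine ⟨hx.1, fun γ hγ => ?_⟩
      obtain ⟨δ, hδW, hγδ, hδx⟩ := hx.2 γ hγ
      rcases hδW with hA | hE
      · exact ⟨δ, hA, hγδ, hδx⟩
      · obtain ⟨δ', hδ'A, hγδ', hδ'δ⟩ := hE.2.2 γ hγδ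
        exact ⟨δ', hδ'A, hγδ', hδ'δ.trans hδx⟩
    have hWcl : IsClosedIn W θ := by
      intro s hs hne hlt
      by_cases hmem : sSup s ∈ s
      · exact hs hmem
      · have hbd : BddAbove s := ⟨θ, fun y hy => (hWsub (hs hy)).le⟩
        have hlp := isLimitPointOf_sSup hbd hne (fun e he => by
          rcases hs he with h | h
          · exact Or.inl h
          · exact Or.inr h.2) hmem
        exact Or.inr ⟨hlt, hlp⟩
    have hEclosed : ∀ (s : Set Ordinal.{u}), s ⊆ E → s.Nonempty → sSup s < θ → sSup s ∈ E := by
      intro s hs hne hlt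
      have hbd : BddAbove s := ⟨θ, fun y hy => ((hs hy).1).le⟩
      exact ⟨hlt, isLimitPointOf_sSup' hbd hne (fun e he => (hs he).2)⟩
    have hEunb : ∀ b, b ≤ θ → (∀ x < b, ∃ a, a ∈ A ∧ x < a ∧ a < b) →
        Cardinal.aleph0 < b.cof → ∀ γ < b, ∃ σ ∈ E, γ < σ ∧ σ < b := by
      intro b hbθ hA' hcof γ hγ
      obtain ⟨σ, hσb, hγσ, hσlp⟩ := exists_limitPoint hcof hγ hA'
      exact ⟨σ, ⟨hσb.trans_le hbθ, hσlp⟩, hγσ, hσb⟩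
    have hκord : θ.cof.ord ≤ κ.ord :=
      Cardinal.ord_le_ord.mpr ((Ordinal.cof_le_card θ).trans hcard)
    have H : ∀ ξ < θ, ∃ D, Good κ ξ D :=
      fun ξ hξ => IH ξ hξ ((Ordinal.card_le_card hξ.le).trans hcard)
    have hACT : AlmostCoherentOn E (fun b => E ∩ Set.Iio b) := by
      intro b hb
      refine ⟨Set.inter_subset_left, ?_, ?_, ?_, ?_⟩
      · exact fun β hβ => ⟨hβ.2, hβ.1.2.isLimit⟩
      · intro s hs hne hlt
        exact ⟨hEclosed s (hs.trans Set.inter_subset_left) hne (hlt.trans hb.1), hlt⟩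
      · intro hcof γ hγ
        obtain ⟨σ, hσE, hγσ, hσb⟩ := hEunb b hb.1.le
          (fun x hx => hb.2.2 x hx) hcof γ hγ
        exact ⟨σ, ⟨hσE, hσb⟩, hγσ⟩
      · intro β hβ
        ext y
        constructor
        · rintro ⟨hyE, hyβ⟩
          have h7 : y < b := lt_trans hyβ hβ.2
          exact ⟨⟨hyE, h7⟩, hyβ⟩
        · rintro ⟨⟨hyE, _⟩, hyβ⟩
          exact ⟨hyE, hyβ⟩
    have hotT : ∀ b ∈ E, OtypeLE ((fun b => E ∩ Set.Iio b) b) κ.ord := by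
      intro b _
      refine le_trans (otype_mono Set.inter_subset_left) ?_
      refine le_trans hotE ?_
      refine le_trans hotA ?_
      exact Ordinal.lift_le.mpr hκord
    obtain ⟨C', hC'E, hC'cond⟩ := extend H W E _ hWsub hWcl
      (fun γ hγ => by
        obtain ⟨a, ha, hγa⟩ := hAunb γ hγ
        exact ⟨a, Or.inl ha, hγa⟩)
      Set.subset_union_right
      (fun b hb hlp => ⟨hWsub hb, hWlp b hlp⟩)
      hACT hotT
    refine ⟨fun α => if α = θ then E else C' α, ?_⟩
    intro α hα
    rcases eq_or_lt_of_le hα with rfl | hαθ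
    · beta_reduce
      rw [if_pos rfl]
      refine ⟨fun β hβ => ⟨hβ.1, hβ.2.isLimit⟩, ?_, ?_, ?_, ?_⟩
      · intro s hs hne hlt
        exact hEclosed s hs hne hlt
      · intro hcof γ hγ
        obtain ⟨σ, hσE, hγσ, _⟩ := hEunb α le_rfl hAunb' hcof γ hγ
        exact ⟨σ, hσE, hγσ⟩
      · intro β hβ
        rw [if_neg (ne_of_lt hβ.1), hC'E β hβ]
      · exact le_trans (otype_mono (fun e he => he)) (hotE.trans (hotA.trans
          (Ordinal.lift_le.mpr hκord)))
    · obtain ⟨h1, h2, h3, h4, h5⟩ := hC'cond α hαθ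
      simp only [if_neg (ne_of_lt hαθ)]
      refine ⟨h1, h2, h3, ?_, h5⟩
      intro β hβ
      rw [if_neg (ne_of_lt ((h1 β hβ).1.trans hαθ))]
      exact h4 β hβ

/-- If there is an almost coherent sequence, with order types at most `κ`, indexed
by a club subset `S` of `κ⁺`, then `□'_κ` holds: there is such a sequence indexed
by all ordinals below `κ⁺`. -/
theorem squarePrime_of_almostCoherent_on_club (κ : Cardinal.{u})
    (hκ : Cardinal.aleph0 < κ)
    (S : Set Ordinal.{u}) (C : Ordinal.{u} → Set Ordinal.{u})
    (hS : IsClubIn S (Order.succ κ).ord)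
    (hAC : AlmostCoherentOn S C)
    (hot : ∀ α ∈ S, OtypeLE (C α) κ.ord) :
    ∃ C' : Ordinal.{u} → Set Ordinal.{u},
      AlmostCoherentOn (Set.Iio (Order.succ κ).ord) C' ∧
      ∀ α < (Order.succ κ).ord, OtypeLE (C' α) κ.ord := by
  classical
  have H : ∀ ξ < (Order.succ κ).ord, ∃ D, Good κ ξ D := by
    intro ξ hξ
    exact exists_good κ ξ (Order.lt_succ_iff.mp (Cardinal.lt_ord.mp hξ))
  obtain ⟨C', hC'S, hcond⟩ := extend H S S C hS.1 hS.2.1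
    (fun γ hγ => by
      obtain ⟨b, hb, hγb⟩ := hS.2.2 γ hγ
      exact ⟨b, hb, hγb.le⟩)
    (fun x hx => hx) (fun b hb _ => hb) hAC hot
  refine ⟨C', ?_, ?_⟩
  · intro α hα
    obtain ⟨h1, h2, h3, h4, h5⟩ := hcond α hα
    exact ⟨fun β hβ => lt_trans (h1 β hβ).1 hα, h1, h2, h3, h4⟩
  · intro α hα
    exact (hcond α hα).2.2.2.2
end

section
/- Let κ be an uncountable cardinal. If □'_κ holds, then □_κ holds. That is, if there is an almost coherent sequence ⟨C_α : α < κ⁺⟩ with ot(C_α) ≤ κ for all α < κ⁺, then there is a coherent sequence ⟨E_α : α < κ⁺⟩ such that for every limit ordinal α < κ⁺, if cof(α) < κ then |E_α| < κ. -/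
open Set Cardinal

universe u

section SqAux
universe v
noncomputable def idx (D : Set Ordinal.{u}) (β : Ordinal.{u}) : Ordinal.{u+1} :=
  otype (D ∩ Iio β)

theorem idx_eq_typein (D : Set Ordinal.{u}) {β : Ordinal.{u}} (hβ : β ∈ D) :
    idx D β = Ordinal.typein ((· < ·) : D → D → Prop) ⟨β, hβ⟩ := by
  rw [← Ordinal.type_subrel]
  exact RelIso.ordinal_type_eq
    ⟨⟨fun x => ⟨⟨x.1, x.2.1⟩, x.2.2⟩, fun y => ⟨y.1.1, y.1.2, y.2⟩,
      fun x => rfl, fun y => rfl⟩, Iff.rfl⟩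

theorem idx_lt_otype {D : Set Ordinal.{u}} {β : Ordinal.{u}} (hβ : β ∈ D) :
    idx D β < otype D := by
  rw [idx_eq_typein D hβ]; exact Ordinal.typein_lt_type _ _

theorem idx_surj {D : Set Ordinal.{u}} {ζ : Ordinal.{u+1}} (h : ζ < otype D) :
    ∃ δ ∈ D, idx D δ = ζ := by
  obtain ⟨⟨δ, hδ⟩, hd⟩ := Ordinal.typein_surj ((· < ·) : D → D → Prop) h
  exact ⟨δ, hδ, by rw [idx_eq_typein D hδ, hd]⟩

theorem idx_inter {D : Set Ordinal.{u}} {δ β : Ordinal.{u}} (h : δ < β) :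
    idx (D ∩ Iio β) δ = idx D δ := by
  unfold idx
  congr 1
  ext x
  simp only [mem_inter_iff, mem_Iio]
  exact ⟨fun h' => ⟨h'.1.1, h'.2⟩, fun h' => ⟨⟨h'.1, h'.2.trans h⟩, h'.2⟩⟩

theorem idx_lt_idx {D : Set Ordinal.{u}} {δ β : Ordinal.{u}} (hδ : δ ∈ D) (h : δ < β) :
    idx D δ < idx D β := by
  rw [← idx_inter (D := D) h]
  exact idx_lt_otype (D := D ∩ Iio β) ⟨hδ, h⟩

theorem lt_of_idx_lt {D : Set Ordinal.{u}} {δ β : Ordinal.{u}} (hδ : δ ∈ D) (hβ : β ∈ D)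
    (h : idx D δ < idx D β) : δ < β := by
  rcases lt_trichotomy δ β with h' | rfl | h'
  · exact h'
  · exact absurd h (lt_irrefl _)
  · exact absurd (idx_lt_idx hβ h') (not_lt.2 h.le)

theorem exists_idx_lt {D : Set Ordinal.{u}} {β : Ordinal.{u}} {ζ : Ordinal.{u+1}}
    (h : ζ < idx D β) : ∃ δ ∈ D, δ < β ∧ idx D δ = ζ := by
  obtain ⟨δ, hδ, hd⟩ := idx_surj (D := D ∩ Iio β) h
  exact ⟨δ, hδ.1, hδ.2, by rw [← idx_inter (D := D) hδ.2, hd]⟩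

noncomputable section


def SqK (Λ : Ordinal.{v}) (S : Set Ordinal.{v}) : Set Ordinal.{v} :=
  S ∪ {x | x < Λ ∧ IsLimitPointOf x S}

open scoped Classical in
def Sqc (Λ : Ordinal.{v}) (S : Set Ordinal.{v}) (l : Ordinal.{v}) : Set Ordinal.{v} :=
  if l = Λ ∨ IsLimitPointOf l (SqK Λ S) then SqK Λ S ∩ Iio l
  else Ioo (sSup (SqK Λ S ∩ Iio l)) l

variable {Λ : Ordinal.{v}} {S : Set Ordinal.{v}}

theorem Sqc_eq_pos {l : Ordinal.{v}} (h : l = Λ ∨ IsLimitPointOf l (SqK Λ S)) :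
    Sqc Λ S l = SqK Λ S ∩ Iio l := by
  rw [Sqc, if_pos h]

theorem Sqc_eq_neg {l : Ordinal.{v}} (h : ¬(l = Λ ∨ IsLimitPointOf l (SqK Λ S))) :
    Sqc Λ S l = Ioo (sSup (SqK Λ S ∩ Iio l)) l := by
  rw [Sqc, if_neg h]

theorem SqK_sub (hS : S ⊆ Iio Λ) : SqK Λ S ⊆ Iio Λ := by
  rintro x (hx | hx)
  · exact hS hx
  · exact hx.1

theorem SqK_unb (hSu : ∀ γ < Λ, ∃ x ∈ S, γ < x) : ∀ γ < Λ, ∃ x ∈ SqK Λ S, γ < x := by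
  intro γ hγ
  obtain ⟨x, hx, hγx⟩ := hSu γ hγ
  exact ⟨x, Or.inl hx, hγx⟩

theorem SqK_closed {x : Ordinal.{v}} (hx : IsLimitPointOf x (SqK Λ S)) (hxΛ : x < Λ) :
    x ∈ SqK Λ S := by
  refine Or.inr ⟨hxΛ, hx.1, fun γ hγ => ?_⟩
  obtain ⟨δ, hδ, hγδ, hδx⟩ := hx.2 γ hγ
  rcases hδ with hδ | hδ
  · exact ⟨δ, hδ, hγδ, hδx⟩
  · obtain ⟨δ', hδ', hγδ', hδ'δ⟩ := hδ.2.2 γ hγδ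
    exact ⟨δ', hδ', hγδ', hδ'δ.trans hδx⟩

theorem Sqc_sub (l : Ordinal.{v}) : Sqc Λ S l ⊆ Iio l := by
  by_cases h : l = Λ ∨ IsLimitPointOf l (SqK Λ S)
  · rw [Sqc_eq_pos h]; exact inter_subset_right
  · rw [Sqc_eq_neg h]; exact fun x hx => hx.2

theorem Sqc_sup_lt {l : Ordinal.{v}} (hl : l ≠ 0)
    (h : ¬(l = Λ ∨ IsLimitPointOf l (SqK Λ S))) :
    sSup (SqK Λ S ∩ Iio l) < l := by
  push_neg at h
  rw [IsLimitPointOf, not_and_or] at h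
  rcases h.2 with h2 | h2
  · exact absurd (not_not.1 h2) hl
  · push_neg at h2
    obtain ⟨γ, hγl, hγ⟩ := h2
    have : sSup (SqK Λ S ∩ Iio l) ≤ γ := by
      apply csSup_le'
      rintro x ⟨hxK, hxl⟩
      by_contra hc
      exact absurd (hγ x hxK (not_le.1 hc)) (not_le.2 hxl)
    exact this.trans_lt hγl

theorem Sqc_unb (hS : S ⊆ Iio Λ) (hSu : ∀ γ < Λ, ∃ x ∈ S, γ < x)
    {l : Ordinal.{v}} (hl : Order.IsSuccLimit l) (hlΛ : l ≤ Λ) :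
    ∀ γ < l, ∃ x ∈ Sqc Λ S l, γ < x := by
  intro γ hγ
  by_cases h : l = Λ ∨ IsLimitPointOf l (SqK Λ S)
  · rw [Sqc_eq_pos h]
    rcases h with rfl | h
    · obtain ⟨x, hx, hγx⟩ := SqK_unb hSu γ hγ
      exact ⟨x, ⟨hx, SqK_sub hS hx⟩, hγx⟩
    · obtain ⟨x, hx, hγx, hxl⟩ := h.2 γ hγ
      exact ⟨x, ⟨hx, hxl⟩, hγx⟩
  · rw [Sqc_eq_neg h]
    refine ⟨max (sSup (SqK Λ S ∩ Iio l)) γ + 1, ⟨?_, ?_⟩, ?_⟩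
    · exact lt_of_le_of_lt (le_max_left _ _) (lt_add_one _)
    · have h1 : max (sSup (SqK Λ S ∩ Iio l)) γ < l :=
        max_lt (Sqc_sup_lt hl.pos.ne' h) hγ
      rw [← Order.succ_eq_add_one]; exact hl.succ_lt h1
    · exact lt_of_le_of_lt (le_max_right _ _) (lt_add_one _)

theorem Sqc_closed (hS : S ⊆ Iio Λ) {l : Ordinal.{v}} (hlΛ : l ≤ Λ) :
    ∀ s ⊆ Sqc Λ S l, s.Nonempty → sSup s < l → sSup s ∈ Sqc Λ S l := by
  intro s hs hne hsup
  by_cases hmem : sSup s ∈ s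
  · exact hs hmem
  have hbdd' : BddAbove s := ⟨l, fun y hy => ((Sqc_sub l) (hs hy)).le⟩
  have hltsup : ∀ x ∈ s, x < sSup s := fun x hx =>
    (le_csSup hbdd' hx).lt_of_ne (fun hc => hmem (hc ▸ hx))
  by_cases h : l = Λ ∨ IsLimitPointOf l (SqK Λ S)
  · rw [Sqc_eq_pos h] at hs ⊢
    have hLP : IsLimitPointOf (sSup s) (SqK Λ S) := by
      constructor
      · obtain ⟨x, hx⟩ := hne
        exact fun hc => absurd (hc ▸ hltsup x hx) (by simp)
      · intro γ hγ
        obtain ⟨δ, hδs, hγδ⟩ := (lt_csSup_iff hbdd' hne).1 hγ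
        exact ⟨δ, (hs hδs).1, hγδ, hltsup δ hδs⟩
    exact ⟨SqK_closed hLP (hsup.trans_le hlΛ), hsup⟩
  · rw [Sqc_eq_neg h] at hs ⊢
    obtain ⟨x, hx⟩ := hne
    exact ⟨(hs hx).1.trans_le (le_csSup hbdd' hx), hsup⟩

theorem Sqc_coh {l ξ : Ordinal.{v}} (hlΛ : l ≤ Λ) (hξl : ξ < l)
    (hξ : IsLimitPointOf ξ (Sqc Λ S l)) :
    Sqc Λ S ξ = Sqc Λ S l ∩ Iio ξ := by
  by_cases h : l = Λ ∨ IsLimitPointOf l (SqK Λ S)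
  · rw [Sqc_eq_pos h] at hξ ⊢
    have hLP : IsLimitPointOf ξ (SqK Λ S) :=
      ⟨hξ.1, fun γ hγ => by
        obtain ⟨δ, hδ, h1, h2⟩ := hξ.2 γ hγ
        exact ⟨δ, hδ.1, h1, h2⟩⟩
    rw [Sqc_eq_pos (Or.inr hLP)]
    ext x
    simp only [mem_inter_iff, mem_Iio]
    exact ⟨fun hx => ⟨⟨hx.1, hx.2.trans hξl⟩, hx.2⟩, fun hx => ⟨hx.1.1, hx.2⟩⟩
  · rw [Sqc_eq_neg h] at hξ
    set g := sSup (SqK Λ S ∩ Iio l) with hg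
    have hgξ : g < ξ := by
      obtain ⟨δ, hδ, _, hδξ⟩ := hξ.2 0 (pos_iff_ne_zero.2 hξ.1)
      exact hδ.1.trans hδξ
    have hKle : ∀ x ∈ SqK Λ S, x < l → x ≤ g :=
      fun x hx hxl => le_csSup ⟨l, fun y hy => hy.2.le⟩ ⟨hx, hxl⟩
    have hKξ : SqK Λ S ∩ Iio ξ = SqK Λ S ∩ Iio l := by
      ext x
      simp only [mem_inter_iff, mem_Iio]
      exact ⟨fun hx => ⟨hx.1, hx.2.trans hξl⟩,
        fun hx => ⟨hx.1, (hKle x hx.1 hx.2).trans_lt hgξ⟩⟩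
    have hnLP : ¬ IsLimitPointOf ξ (SqK Λ S) := by
      rintro ⟨_, h2⟩
      obtain ⟨δ, hδK, hgδ, hδξ⟩ := h2 g hgξ
      exact absurd (hKle δ hδK (hδξ.trans hξl)) (not_le.2 hgδ)
    rw [Sqc_eq_neg (by push_neg; exact ⟨(hξl.trans_le hlΛ).ne, hnLP⟩), hKξ, Sqc_eq_neg h]
    ext x
    simp only [mem_Ioo, mem_inter_iff, mem_Iio]
    exact ⟨fun hx => ⟨⟨hx.1, hx.2.trans hξl⟩, hx.2⟩, fun hx => ⟨hx.1.1, hx.2⟩⟩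


theorem exists_unbounded_card (o : Ordinal.{u}) :
    ∃ T : Set Ordinal.{u}, T ⊆ Iio o ∧ (∀ γ < o, ∃ t ∈ T, γ ≤ t) ∧
      Cardinal.mk T = Cardinal.lift.{u+1} o.cof := by
  obtain ⟨s, hs, hcard⟩ := Order.exists_cof_eq (Iio o)
  refine ⟨Subtype.val '' s, ?_, ?_, ?_⟩
  · rintro _ ⟨x, _, rfl⟩
    exact x.2
  · intro γ hγ
    obtain ⟨b, hb, hle⟩ := hs ⟨γ, hγ⟩
    exact ⟨b, ⟨b, hb, rfl⟩, hle⟩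
  · rw [Cardinal.mk_image_eq Subtype.val_injective, hcard, Order.cof_Iio, Ordinal.typein_ordinal,
      ← Ordinal.lift_cof]

theorem nat_add_lt_of_isLimit {α : Ordinal.{u}} (h : Order.IsSuccLimit α) {x : Ordinal.{u}}
    (hx : x < α) (n : ℕ) : x + n < α := by
  induction n with
  | zero => simpa using hx
  | succ k ih =>
      have : x + (k + 1 : ℕ) = Order.succ (x + k) := by
        push_cast
        rw [← add_assoc, Ordinal.add_one_eq_succ]
      rw [this]
      exact h.succ_lt ih

theorem exists_pad {α : Ordinal.{u}} (hα : Order.IsSuccLimit α) (hcof : α.cof ≤ ℵ₀) :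
    ∃ g : ℕ → Ordinal.{u}, StrictMono g ∧ (∀ n, g n < α) ∧ ∀ γ < α, ∃ n, γ < g n := by
  obtain ⟨T, hTsub, hTunb, hTcard⟩ := exists_unbounded_card α
  have hTne : T.Nonempty := by
    obtain ⟨t, ht, _⟩ := hTunb 0 hα.pos
    exact ⟨t, ht⟩
  have hTctble : T.Countable := by
    rw [← Set.countable_coe_iff, ← Cardinal.mk_le_aleph0_iff, hTcard]
    calc Cardinal.lift.{u+1} α.cof ≤ Cardinal.lift.{u+1} ℵ₀ := Cardinal.lift_le.2 hcof
      _ = ℵ₀ := Cardinal.lift_aleph0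
  obtain ⟨f, hfT⟩ := hTctble.exists_eq_range hTne
  set m : ℕ → Ordinal.{u} := fun n => (Finset.range (n + 1)).sup f with hm
  have hmlt : ∀ n, m n < α := by
    intro n
    rw [hm]
    apply Finset.sup_lt_iff (by simpa using hα.pos) |>.2
    intro k _
    have : f k ∈ T := hfT ▸ Set.mem_range_self k
    exact hTsub this
  have hmmono : Monotone m := fun a b hab =>
    Finset.sup_mono (Finset.range_subset_range.2 (by omega))
  have hfm : ∀ k n, k ≤ n → f k ≤ m n := fun k n hk =>
    Finset.le_sup (Finset.mem_range.2 (by omega))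
  refine ⟨fun n => m n + (n + 1 : ℕ), ?_, ?_, ?_⟩
  · intro a b hab
    calc m a + (a + 1 : ℕ) < m a + (b + 1 : ℕ) := by
          exact add_lt_add_right (by exact_mod_cast Nat.succ_lt_succ hab) _
      _ ≤ m b + (b + 1 : ℕ) := by
          exact add_le_add_left (hmmono hab.le) _
  · intro n
    exact nat_add_lt_of_isLimit hα (hmlt n) (n + 1)
  · intro γ hγ
    obtain ⟨t, ht, hγt⟩ := hTunb γ hγ
    rw [hfT] at ht
    obtain ⟨k, rfl⟩ := ht
    refine ⟨k, hγt.trans_lt ?_⟩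
    calc f k ≤ m k := hfm k k le_rfl
      _ < m k + (k + 1 : ℕ) := by
          exact lt_add_of_pos_right _ (by exact_mod_cast Nat.succ_pos k)

noncomputable def SqPad (α : Ordinal.{u}) : ℕ → Ordinal.{u} :=
  open scoped Classical in
  if h : ∃ g : ℕ → Ordinal.{u}, StrictMono g ∧ (∀ n, g n < α) ∧ ∀ γ < α, ∃ n, γ < g n
  then h.choose else fun _ => 0

theorem SqPad_spec {α : Ordinal.{u}} (hα : Order.IsSuccLimit α) (hcof : α.cof ≤ ℵ₀) :
    StrictMono (SqPad α) ∧ (∀ n, SqPad α n < α) ∧ ∀ γ < α, ∃ n, γ < SqPad α n := by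
  have h := exists_pad hα hcof
  rw [SqPad, dif_pos h]
  exact h.choose_spec

end
end SqAux

noncomputable def SqE (C : Ordinal.{u} → Set Ordinal.{u})
    (cc : Ordinal.{u+1} → Set Ordinal.{u+1}) (α : Ordinal.{u}) : Set Ordinal.{u} :=
  open scoped Classical in
  if ∀ γ < α, ∃ δ ∈ C α, γ < δ then {β | β ∈ C α ∧ idx (C α) β ∈ cc (otype (C α))}
  else Set.range (SqPad α)

theorem SqE_pos {C : Ordinal.{u} → Set Ordinal.{u}} {cc : Ordinal.{u+1} → Set Ordinal.{u+1}}
    {α : Ordinal.{u}} (h : ∀ γ < α, ∃ δ ∈ C α, γ < δ) :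
    SqE C cc α = {β | β ∈ C α ∧ idx (C α) β ∈ cc (otype (C α))} := by
  rw [SqE, if_pos h]

theorem SqE_neg {C : Ordinal.{u} → Set Ordinal.{u}} {cc : Ordinal.{u+1} → Set Ordinal.{u+1}}
    {α : Ordinal.{u}} (h : ¬ ∀ γ < α, ∃ δ ∈ C α, γ < δ) :
    SqE C cc α = Set.range (SqPad α) := by
  rw [SqE, if_neg h]

section Main

variable {θ : Ordinal.{u}} {Λ : Ordinal.{u+1}} {C : Ordinal.{u} → Set Ordinal.{u}}
  {S : Set Ordinal.{u+1}}

-- order type of an unbounded C α is a limit ordinal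
theorem otype_isLimit {α : Ordinal.{u}} (hα : Order.IsSuccLimit α)
    (hsub : ∀ β ∈ C α, β < α) (hU : ∀ γ < α, ∃ δ ∈ C α, γ < δ) :
    Order.IsSuccLimit (otype (C α)) := by
  rw [Ordinal.isSuccLimit_iff, Order.isSuccPrelimit_iff_succ_lt]
  constructor
  · obtain ⟨δ0, hδ0, _⟩ := hU 0 hα.pos
    exact Ordinal.type_ne_zero_iff_nonempty.2 ⟨⟨δ0, hδ0⟩⟩
  · intro ζ hζ
    obtain ⟨δ, hδD, hidx⟩ := idx_surj hζ
    obtain ⟨δ', hδ'D, hδδ'⟩ := hU δ (hsub δ hδD)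
    exact (Order.succ_le_of_lt (hidx ▸ idx_lt_idx hδD hδδ')).trans_lt (idx_lt_otype hδ'D)

theorem SqE_coherent (hAC : AlmostCoherentOn (Iio θ) C)
    (hot' : ∀ α < θ, otype (C α) ≤ Λ)
    (hS : S ⊆ Iio Λ) (hSu : ∀ γ < Λ, ∃ x ∈ S, γ < x) :
    IsCoherentSeq θ (SqE C (Sqc Λ S)) := by
  intro α hαθ hαlim
  obtain ⟨h1, h2, h3, h4, h5⟩ := hAC α hαθ
  by_cases hU : ∀ γ < α, ∃ δ ∈ C α, γ < δ
  -- THIN CASE --------------------------------------------------------------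
  · have hE := SqE_pos (cc := Sqc Λ S) hU
    set D := C α with hD
    set lD := otype D with hlD
    have hlDΛ : lD ≤ Λ := hot' α hαθ
    have hsub : ∀ β ∈ D, β < α := fun β hβ => (h2 β hβ).1
    have hlDlim : Order.IsSuccLimit lD := otype_isLimit hαlim hsub hU
    have hEsubD : SqE C (Sqc Λ S) α ⊆ D := by
      rw [hE]; exact fun x hx => hx.1
    have hEsub : SqE C (Sqc Λ S) α ⊆ Iio α := fun x hx => hsub x (hEsubD hx)
    constructor
    · refine ⟨hEsub, ?_, ?_⟩
      -- closed
      · intro s hs hne hsup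
        by_cases hmem : sSup s ∈ s
        · exact hs hmem
        have hsD : s ⊆ D := fun x hx => hEsubD (hs hx)
        have hβD : sSup s ∈ D := h3 s hsD hne hsup
        have hbdd : BddAbove s := ⟨α, fun x hx => (hsub x (hsD hx)).le⟩
        have hlt : ∀ x ∈ s, x < sSup s := fun x hx =>
          (le_csSup hbdd hx).lt_of_ne (fun hc => hmem (hc ▸ hx))
        have hidxlt : ∀ x ∈ s, idx D x < idx D (sSup s) := fun x hx =>
          idx_lt_idx (hsD hx) (hlt x hx)
        have hTbdd : BddAbove (idx D '' s) := by
          refine ⟨idx D (sSup s), ?_⟩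
          rintro _ ⟨x, hx, rfl⟩
          exact (hidxlt x hx).le
        have hTne : (idx D '' s).Nonempty := hne.image _
        have hsup_le : sSup (idx D '' s) ≤ idx D (sSup s) := by
          apply csSup_le hTne
          rintro _ ⟨x, hx, rfl⟩
          exact (hidxlt x hx).le
        have hsup_ge : idx D (sSup s) ≤ sSup (idx D '' s) := by
          by_contra hcon
          push_neg at hcon
          obtain ⟨δ', hδ'D, hδ'β, hidx'⟩ := exists_idx_lt hcon
          obtain ⟨δ, hδs, hδ'δ⟩ : ∃ δ ∈ s, δ' < δ := by
            by_contra hc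
            push_neg at hc
            exact absurd (csSup_le hne hc) (not_le.2 hδ'β)
          have hle : idx D δ ≤ sSup (idx D '' s) := le_csSup hTbdd ⟨δ, hδs, rfl⟩
          have hgt : sSup (idx D '' s) < idx D δ := hidx' ▸ idx_lt_idx hδ'D hδ'δ
          exact absurd hle (not_le.2 hgt)
        have hsupT : sSup (idx D '' s) = idx D (sSup s) := le_antisymm hsup_le hsup_ge
        have hc : idx D (sSup s) ∈ Sqc Λ S lD := by
          rw [← hsupT]
          refine Sqc_closed hS hlDΛ (idx D '' s) ?_ hTne (hsupT ▸ idx_lt_otype hβD)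
          rintro _ ⟨x, hx, rfl⟩
          have hx' := hs hx
          rw [hE] at hx'
          exact hx'.2
        rw [hE]
        exact ⟨hβD, hc⟩
      -- unbounded
      · intro γ hγ
        obtain ⟨δ0, hδ0D, hγδ0⟩ := hU γ hγ
        obtain ⟨ξ, hξc, hζξ⟩ := Sqc_unb hS hSu hlDlim hlDΛ (idx D δ0) (idx_lt_otype hδ0D)
        obtain ⟨δ1, hδ1D, hidx1⟩ := idx_surj ((Sqc_sub lD) hξc)
        have hδ01 : δ0 < δ1 := lt_of_idx_lt hδ0D hδ1D (hidx1 ▸ hζξ)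
        refine ⟨δ1, ?_, hγδ0.trans hδ01⟩
        rw [hE]
        exact ⟨hδ1D, hidx1 ▸ hξc⟩
    -- coherence
    · intro β hβLP
      rcases lt_trichotomy β α with hβα | rfl | hαβ
      · -- main case
        have hβD : β ∈ D := by
          have hne : (D ∩ Iio β).Nonempty := by
            obtain ⟨δ, hδE, _, hδβ⟩ := hβLP.2 0 (pos_iff_ne_zero.2 hβLP.1)
            exact ⟨δ, hEsubD hδE, hδβ⟩
          have hbdd : BddAbove (D ∩ Iio β) := ⟨β, fun x hx => hx.2.le⟩
          have hsup_le : sSup (D ∩ Iio β) ≤ β := csSup_le hne (fun x hx => hx.2.le)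
          have hsup_ge : β ≤ sSup (D ∩ Iio β) := by
            by_contra hcon
            push_neg at hcon
            obtain ⟨δ, hδE, hsδ, hδβ⟩ := hβLP.2 _ hcon
            exact absurd (le_csSup hbdd ⟨hEsubD hδE, hδβ⟩) (not_le.2 hsδ)
          have heq : sSup (D ∩ Iio β) = β := le_antisymm hsup_le hsup_ge
          have := h3 (D ∩ Iio β) inter_subset_left hne (by rw [heq]; exact hβα)
          rwa [heq] at this
        have hξlD : idx D β < lD := idx_lt_otype hβD
        have hLPξ : IsLimitPointOf (idx D β) (Sqc Λ S lD) := by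
          constructor
          · have hne : (D ∩ Iio β).Nonempty := by
              obtain ⟨δ, hδE, _, hδβ⟩ := hβLP.2 0 (pos_iff_ne_zero.2 hβLP.1)
              exact ⟨δ, hEsubD hδE, hδβ⟩
            exact Ordinal.type_ne_zero_iff_nonempty.2 ⟨⟨hne.some, hne.some_mem⟩⟩
          · intro ζ hζ
            obtain ⟨δ', hδ'D, hδ'β, rfl⟩ := exists_idx_lt hζ
            obtain ⟨δ, hδE, hδ'δ, hδβ⟩ := hβLP.2 δ' hδ'β
            refine ⟨idx D δ, ?_, idx_lt_idx hδ'D hδ'δ, idx_lt_idx (hEsubD hδE) hδβ⟩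
            exact (hE ▸ hδE : _).2
        have hc4 : Sqc Λ S (idx D β) = Sqc Λ S lD ∩ Iio (idx D β) :=
          Sqc_coh hlDΛ hξlD hLPξ
        have hCβ : C β = D ∩ Iio β := h5 β hβD
        have hUβ : ∀ γ < β, ∃ δ ∈ C β, γ < δ := by
          intro γ hγ
          obtain ⟨δ, hδE, hγδ, hδβ⟩ := hβLP.2 γ hγ
          exact ⟨δ, hCβ ▸ ⟨hEsubD hδE, hδβ⟩, hγδ⟩
        have hEβ := SqE_pos (cc := Sqc Λ S) hUβ
        have hotβ : otype (C β) = idx D β := by rw [hCβ]; rfl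
        ext x
        simp only [mem_inter_iff, mem_Iio]
        constructor
        · intro hx
          rw [hEβ] at hx
          obtain ⟨hxCβ, hxc⟩ := hx
          have hxD : x ∈ D := (hCβ ▸ hxCβ : _).1
          have hxβ : x < β := (hCβ ▸ hxCβ : _).2
          have hidxeq : idx (C β) x = idx D x := by rw [hCβ]; exact idx_inter hxβ
          rw [hotβ, hidxeq, hc4] at hxc
          refine ⟨?_, hxβ⟩
          rw [hE]
          exact ⟨hxD, hxc.1⟩
        · rintro ⟨hxE, hxβ⟩
          have hxD : x ∈ D := hEsubD hxE
          have hxc : idx D x ∈ Sqc Λ S lD := (hE ▸ hxE : _).2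
          rw [hEβ]
          refine ⟨hCβ ▸ ⟨hxD, hxβ⟩, ?_⟩
          have hidxeq : idx (C β) x = idx D x := by rw [hCβ]; exact idx_inter hxβ
          rw [hotβ, hidxeq, hc4]
          exact ⟨hxc, idx_lt_idx hxD hxβ⟩
      · -- β = α
        ext x
        simp only [mem_inter_iff, mem_Iio]
        exact ⟨fun hx => ⟨hx, hEsub hx⟩, fun hx => hx.1⟩
      · -- β > α : impossible
        exfalso
        obtain ⟨δ, hδE, hαδ, _⟩ := hβLP.2 α hαβ
        exact absurd (hEsub hδE) (not_lt.2 hαδ.le)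
  -- PAD CASE ---------------------------------------------------------------
  · have hcof : α.cof ≤ ℵ₀ := by
      by_contra hcon
      exact hU (h4 (not_le.1 hcon))
    obtain ⟨hmono, hlt, hcofin⟩ := SqPad_spec hαlim hcof
    have hE := SqE_neg (cc := Sqc Λ S) hU
    have hEsub : SqE C (Sqc Λ S) α ⊆ Iio α := by
      rw [hE]; rintro _ ⟨n, rfl⟩; exact hlt n
    constructor
    · refine ⟨hEsub, ?_, ?_⟩
      · -- closed
        intro s hs hne hsup
        by_cases hmem : sSup s ∈ s
        · exact hs hmem
        exfalso
        obtain ⟨N, hN⟩ := hcofin (sSup s) hsup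
        have hfin : s ⊆ SqPad α '' (Iio (N : ℕ)) := by
          intro x hx
          have hx' := hs hx
          rw [hE] at hx'
          obtain ⟨k, rfl⟩ := hx'
          have hbdd : BddAbove s := ⟨α, fun y hy => (hEsub (hs hy)).le⟩
          have : SqPad α k ≤ sSup s := le_csSup hbdd hx
          have hkN : k < N := by
            by_contra hc
            exact absurd (this.trans_lt hN) (not_lt.2 (hmono.monotone (not_lt.1 hc)))
          exact ⟨k, hkN, rfl⟩
        have hsfin : s.Finite := Set.Finite.subset ((Set.finite_Iio _).image _) hfin
        exact hmem (hne.csSup_mem hsfin)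
      · -- unbounded
        intro γ hγ
        obtain ⟨n, hn⟩ := hcofin γ hγ
        refine ⟨SqPad α n, ?_, hn⟩
        rw [hE]
        exact Set.mem_range_self n
    · intro β hβLP
      rcases lt_trichotomy β α with hβα | rfl | hαβ
      · exfalso
        have hNex : ∃ n, β ≤ SqPad α n := by
          obtain ⟨n, hn⟩ := hcofin β hβα
          exact ⟨n, hn.le⟩
        set N := Nat.find hNex with hNdef
        have hfound : β ≤ SqPad α N := Nat.find_spec hNex
        rcases Nat.eq_zero_or_pos N with h0 | hpos
        · obtain ⟨δ, hδE, _, hδβ⟩ := hβLP.2 0 (pos_iff_ne_zero.2 hβLP.1)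
          rw [hE] at hδE
          obtain ⟨k, rfl⟩ := hδE
          have : β ≤ SqPad α k := (h0 ▸ hfound).trans (hmono.monotone (Nat.zero_le k))
          exact absurd hδβ (not_lt.2 this)
        · obtain ⟨m, hm⟩ := Nat.exists_eq_add_of_lt hpos
          have hmN : m < N := by omega
          have hnotle : ¬ β ≤ SqPad α m := Nat.find_min hNex hmN
          obtain ⟨δ, hδE, hmδ, hδβ⟩ := hβLP.2 (SqPad α m) (not_le.1 hnotle)
          rw [hE] at hδE
          obtain ⟨k, rfl⟩ := hδE
          have hmk : m < k := by
            by_contra hc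
            exact absurd (hmono.monotone (not_lt.1 hc)) (not_le.2 hmδ)
          have : β ≤ SqPad α k := hfound.trans (hmono.monotone (by omega))
          exact absurd hδβ (not_lt.2 this)
      · ext x
        simp only [mem_inter_iff, mem_Iio]
        exact ⟨fun hx => ⟨hx, hEsub hx⟩, fun hx => hx.1⟩
      · exfalso
        obtain ⟨δ, hδE, hαδ, _⟩ := hβLP.2 α hαβ
        exact absurd (hEsub hδE) (not_lt.2 hαδ.le)

end Main

section Card

variable {κ : Cardinal.{u}} {C : Ordinal.{u} → Set Ordinal.{u}} {S : Set Ordinal.{u+1}}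

theorem acc_inj (hSu : ∀ γ < Ordinal.lift.{u+1} κ.ord, ∃ x ∈ S, γ < x) :
    #{x : Ordinal.{u+1} | x < Ordinal.lift.{u+1} κ.ord ∧ IsLimitPointOf x S} ≤ #S := by
  set Λ := Ordinal.lift.{u+1} κ.ord
  set A := {x : Ordinal.{u+1} | x < Λ ∧ IsLimitPointOf x S} with hA
  have hne : ∀ x : A, {y ∈ S | (x : Ordinal.{u+1}) ≤ y}.Nonempty := by
    rintro ⟨x, hxΛ, _⟩
    obtain ⟨y, hyS, hxy⟩ := hSu x hxΛ
    exact ⟨y, hyS, hxy.le⟩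
  set φ : A → S := fun x => ⟨sInf {y ∈ S | (x : Ordinal.{u+1}) ≤ y}, (csInf_mem (hne x)).1⟩
    with hφ
  have hmono : ∀ x y : A, (x : Ordinal.{u+1}) < y → (φ x : Ordinal.{u+1}) < φ y := by
    rintro ⟨x, hx⟩ ⟨y, hy⟩ hxy
    obtain ⟨δ, hδS, hxδ, hδy⟩ := hy.2.2 x hxy
    have h1 : (φ ⟨x, hx⟩ : Ordinal.{u+1}) ≤ δ :=
      csInf_le (OrderBot.bddBelow _) ⟨hδS, hxδ.le⟩
    have h2 : y ≤ (φ ⟨y, hy⟩ : Ordinal.{u+1}) :=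
      le_csInf (hne ⟨y, hy⟩) (fun b hb => hb.2)
    exact (h1.trans_lt hδy).trans_le h2
  have hinj : Function.Injective φ := by
    rintro x y hxy
    rcases lt_trichotomy (x : Ordinal.{u+1}) (y : Ordinal.{u+1}) with h | h | h
    · exact absurd (congrArg Subtype.val hxy) (hmono x y h).ne
    · exact Subtype.ext h
    · exact absurd (congrArg Subtype.val hxy).symm (hmono y x h).ne
  exact Cardinal.mk_le_of_injective hinj

theorem SqE_card (hκ : Cardinal.aleph0 < κ)
    (hAC : AlmostCoherentOn (Iio (Order.succ κ).ord) C)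
    (hot : ∀ α < (Order.succ κ).ord, OtypeLE (C α) κ.ord)
    (hSu : ∀ γ < Ordinal.lift.{u+1} κ.ord, ∃ x ∈ S, γ < x)
    (hScard : ∀ α < (Order.succ κ).ord, Order.IsSuccLimit α → α.cof < κ →
      (∀ γ < α, ∃ δ ∈ C α, γ < δ) → otype (C α) = Ordinal.lift.{u+1} κ.ord →
      Cardinal.mk S < Cardinal.lift.{u+2} (Cardinal.lift.{u+1} κ)) :
    ∀ α < (Order.succ κ).ord, Order.IsSuccLimit α → α.cof < κ →
      #(SqE C (Sqc (Ordinal.lift.{u+1} κ.ord) S) α) < Cardinal.lift.{u+1} κ := by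
  set Λ := Ordinal.lift.{u+1} κ.ord with hΛdef
  intro α hαθ hαlim hcof
  by_cases hU : ∀ γ < α, ∃ δ ∈ C α, γ < δ
  · -- thin case
    have hE := SqE_pos (cc := Sqc Λ S) hU
    set D := C α with hD
    set lD := otype D with hlDdef
    have hlDΛ : lD ≤ Λ := hot α hαθ
    -- injection into Sqc Λ S lD
    have hmemE : ∀ z : Ordinal.{u}, z ∈ SqE C (Sqc Λ S) α → (z ∈ D ∧ idx D z ∈ Sqc Λ S lD) := by
      intro z hz
      rw [hE] at hz
      exact hz
    have hembed : Nonempty (↥(SqE C (Sqc Λ S) α) ↪ ↥(Sqc Λ S lD)) := by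
      refine ⟨⟨fun x => ⟨idx D x.1, (hmemE x.1 x.2).2⟩, ?_⟩⟩
      · rintro x y hxy
        have hxD : (x : Ordinal.{u}) ∈ D := (hmemE x.1 x.2).1
        have hyD : (y : Ordinal.{u}) ∈ D := (hmemE y.1 y.2).1
        have := congrArg Subtype.val hxy
        simp only at this
        rcases lt_trichotomy (x : Ordinal.{u}) (y : Ordinal.{u}) with h | h | h
        · exact absurd this (idx_lt_idx hxD h).ne
        · exact Subtype.ext h
        · exact absurd this.symm (idx_lt_idx hyD h).ne
    have hkey : Cardinal.lift.{u+2} #(SqE C (Sqc Λ S) α) ≤ Cardinal.lift.{u+1} #(Sqc Λ S lD) :=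
      Cardinal.lift_mk_le'.2 hembed
    rw [Cardinal.lift_id'.{u+1,u+2}] at hkey
    have hfinal : #(Sqc Λ S lD) < Cardinal.lift.{u+2} (Cardinal.lift.{u+1} κ) := by
      by_cases hlD : lD = Λ
      · -- top case
        have hSsmall : #S < Cardinal.lift.{u+2} (Cardinal.lift.{u+1} κ) :=
          hScard α hαθ hαlim hcof hU (by rw [← hlDdef, hlD])
        have h1 : #(Sqc Λ S lD) ≤ #(SqK Λ S) := by
          rw [hlD, Sqc_eq_pos (Or.inl rfl)]
          exact Cardinal.mk_le_mk_of_subset inter_subset_left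
        have h2 : #(SqK Λ S) ≤ #S + #{x : Ordinal.{u+1} | x < Λ ∧ IsLimitPointOf x S} :=
          Cardinal.mk_union_le _ _
        have h3 := acc_inj (κ := κ) hSu
        have hL : ℵ₀ ≤ Cardinal.lift.{u+2} (Cardinal.lift.{u+1} κ) := by
          have : ℵ₀ < Cardinal.lift.{u+2} (Cardinal.lift.{u+1} κ) := by
            rw [Cardinal.aleph0_lt_lift, Cardinal.aleph0_lt_lift]
            exact hκ
          exact this.le
        calc #(Sqc Λ S lD) ≤ #S + #{x : Ordinal.{u+1} | x < Λ ∧ IsLimitPointOf x S} :=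
              h1.trans h2
          _ ≤ #S + #S := by exact add_le_add le_rfl h3
          _ < Cardinal.lift.{u+2} (Cardinal.lift.{u+1} κ) :=
              Cardinal.add_lt_of_lt hL hSsmall hSsmall
      · -- lD < Λ
        have hlt : lD < Λ := hlDΛ.lt_of_ne hlD
        have h1 : #(Sqc Λ S lD) ≤ #(Iio lD) := Cardinal.mk_le_mk_of_subset (Sqc_sub lD)
        have h2 : #(Iio lD) = Cardinal.lift.{u+2} lD.card := Ordinal.mk_Iio_ordinal lD
        have h3 : lD.card < Cardinal.lift.{u+1} κ := by
          rw [Cardinal.lt_ord.symm, ← Cardinal.lift_ord]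
          exact hlt
        calc #(Sqc Λ S lD) ≤ Cardinal.lift.{u+2} lD.card := h1.trans_eq h2
          _ < Cardinal.lift.{u+2} (Cardinal.lift.{u+1} κ) := Cardinal.lift_lt.2 h3
    have := hkey.trans_lt hfinal
    rwa [← Cardinal.lift_lt.{u+1, u+2}]
  · -- pad case
    rw [SqE_neg (cc := Sqc Λ S) hU]
    have hctble : (Set.range (SqPad α)).Countable := Set.countable_range _
    have h1 : #(Set.range (SqPad α)) ≤ ℵ₀ := by
      rw [Cardinal.mk_le_aleph0_iff]
      exact hctble.to_subtype
    exact h1.trans_lt (Cardinal.aleph0_lt_lift.2 hκ)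

end Card

/-- `□'_κ` implies `□_κ`: if there is an almost coherent sequence
`⟨C α : α < κ⁺⟩` with `ot (C α) ≤ κ` for all `α < κ⁺`, then there is a coherent
sequence `⟨E α : α < κ⁺⟩` such that for every limit `α < κ⁺`, if `cof α < κ`
then `|E α| < κ`. -/
theorem square_of_squarePrime (κ : Cardinal.{u})
    (hκ : Cardinal.aleph0 < κ)
    (C : Ordinal.{u} → Set Ordinal.{u})
    (hAC : AlmostCoherentOn (Set.Iio (Order.succ κ).ord) C)
    (hot : ∀ α < (Order.succ κ).ord, OtypeLE (C α) κ.ord) :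
    ∃ E : Ordinal.{u} → Set Ordinal.{u},
      IsCoherentSeq (Order.succ κ).ord E ∧
      ∀ α < (Order.succ κ).ord, Order.IsSuccLimit α → α.cof < κ → Cardinal.mk (E α) < Cardinal.lift.{u + 1} κ := by
  classical
  set Λ := Ordinal.lift.{u+1} κ.ord with hΛdef
  have hot2 : ∀ α < (Order.succ κ).ord, otype (C α) ≤ Λ := fun α hα => hot α hα
  have hΛlim : Order.IsSuccLimit Λ := by
    rw [hΛdef]
    exact Ordinal.isSuccLimit_lift.2 (Cardinal.isSuccLimit_ord hκ.le)
  obtain ⟨S, hS, hSu, hScard⟩ :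
      ∃ S : Set Ordinal.{u+1}, S ⊆ Iio Λ ∧ (∀ γ < Λ, ∃ x ∈ S, γ < x) ∧
        (∀ α < (Order.succ κ).ord, Order.IsSuccLimit α → α.cof < κ →
          (∀ γ < α, ∃ δ ∈ C α, γ < δ) → otype (C α) = Λ →
          Cardinal.mk S < Cardinal.lift.{u+2} (Cardinal.lift.{u+1} κ)) := by
    by_cases htop : ∃ α, α < (Order.succ κ).ord ∧ Order.IsSuccLimit α ∧ α.cof < κ ∧
        (∀ γ < α, ∃ δ ∈ C α, γ < δ) ∧ otype (C α) = Λ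
    · set A := {c : Cardinal.{u} | ∃ α, (α < (Order.succ κ).ord ∧ Order.IsSuccLimit α ∧ α.cof < κ ∧
          (∀ γ < α, ∃ δ ∈ C α, γ < δ) ∧ otype (C α) = Λ) ∧ α.cof = c} with hA
      have hAne : A.Nonempty := by
        obtain ⟨α, hα⟩ := htop
        exact ⟨α.cof, α, hα, rfl⟩
      obtain ⟨α₀, hα₀, hcof₀⟩ := csInf_mem hAne
      obtain ⟨hα₀θ, hα₀lim, hα₀cof, hU₀, hot₀⟩ := hα₀
      obtain ⟨T, hTsub, hTunb, hTcard⟩ := exists_unbounded_card α₀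
      set d : Ordinal.{u} → Ordinal.{u} := fun t =>
        if h : ∃ δ ∈ C α₀, t < δ then h.choose else 0 with hd
      have hdspec : ∀ t < α₀, d t ∈ C α₀ ∧ t < d t := by
        intro t ht
        have h := hU₀ t ht
        rw [hd]
        simp only [dif_pos h]
        obtain ⟨hc1, hc2⟩ := h.choose_spec
        exact ⟨hc1, hc2⟩
      refine ⟨(fun t => idx (C α₀) (d t)) '' T, ?_, ?_, ?_⟩
      · rintro _ ⟨t, ht, rfl⟩
        rw [mem_Iio, ← hot₀]
        exact idx_lt_otype (hdspec t (hTsub ht)).1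
      · intro γ hγ
        rw [← hot₀] at hγ
        obtain ⟨δ, hδC, hidxδ⟩ := idx_surj hγ
        have hδα₀ : δ < α₀ := ((hAC α₀ hα₀θ).2.1 δ hδC).1
        obtain ⟨t, htT, hδt⟩ := hTunb δ hδα₀
        obtain ⟨hdC, htd⟩ := hdspec t (hTsub htT)
        refine ⟨idx (C α₀) (d t), ⟨t, htT, rfl⟩, ?_⟩
        rw [← hidxδ]
        exact idx_lt_idx hδC (hδt.trans_lt htd)
      · intro α hαθ hαlim hαcof hU hotα
        have himg : Cardinal.lift.{u+1} #((fun t => idx (C α₀) (d t)) '' T) ≤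
            Cardinal.lift.{u+2} #T := Cardinal.mk_image_le_lift
        rw [Cardinal.lift_id'.{u+1,u+2}] at himg
        have hν : α₀.cof ≤ α.cof := by
          rw [hcof₀]
          exact csInf_le (OrderBot.bddBelow A) ⟨α, ⟨hαθ, hαlim, hαcof, hU, hotα⟩, rfl⟩
        calc #((fun t => idx (C α₀) (d t)) '' T) ≤ Cardinal.lift.{u+2} #T := himg
          _ = Cardinal.lift.{u+2} (Cardinal.lift.{u+1} α₀.cof) := by rw [hTcard]
          _ ≤ Cardinal.lift.{u+2} (Cardinal.lift.{u+1} α.cof) := by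
              rw [Cardinal.lift_le, Cardinal.lift_le]; exact hν
          _ < Cardinal.lift.{u+2} (Cardinal.lift.{u+1} κ) := by
              rw [Cardinal.lift_lt, Cardinal.lift_lt]; exact hαcof
    · refine ⟨Iio Λ, le_refl _, ?_, ?_⟩
      · intro γ hγ
        refine ⟨γ + 1, ?_, lt_add_one γ⟩
        rw [mem_Iio, Ordinal.add_one_eq_succ]
        exact hΛlim.succ_lt hγ
      · intro α hαθ hαlim hαcof hU hotα
        exact absurd ⟨α, hαθ, hαlim, hαcof, hU, hotα⟩ htop
  exact ⟨SqE C (Sqc Λ S), SqE_coherent hAC hot2 hS hSu, SqE_card hκ hAC hot hSu hScard⟩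
end
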